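/- The commutative rings ℤ[x, v]/(2x³, 2vx, v² − x²) and ℤ[x, y]/(2x³ + x²y, x², 2xy + y²) are not isomorphic. -/

import Mathlib

open MvPolynomial

/-- Example 6.2: the integral orbifold Chow ring of `P(1,1,2)`,
`ℤ[x,v]/(2x³, 2vx, v² - x²)`, is not isomorphic to the integral Chow ring of its
crepant resolution `F₂`, `ℤ[x,y]/(2x³ + x²y, x², 2xy + y²)`.
(Variables: `0 = x, 1 = v` resp. `0 = x, 1 = y`.) -/
theorem orbifold_chow_ne_crepant_chow :
    ¬ Nonempty
      ((MvPolynomial (Fin 2) ℤ ⧸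
          Ideal.span {(2 * X 0 ^ 3 : MvPolynomial (Fin 2) ℤ),
            2 * X 1 * X 0, X 1 ^ 2 - X 0 ^ 2}) ≃+*
        (MvPolynomial (Fin 2) ℤ ⧸
          Ideal.span {(2 * X 0 ^ 3 + X 0 ^ 2 * X 1 : MvPolynomial (Fin 2) ℤ),
            X 0 ^ 2, 2 * X 0 * X 1 + X 1 ^ 2})) := by
  rintro ⟨e⟩
  set IA : Ideal (MvPolynomial (Fin 2) ℤ) :=
    Ideal.span {(2 * X 0 ^ 3 : MvPolynomial (Fin 2) ℤ), 2 * X 1 * X 0, X 1 ^ 2 - X 0 ^ 2} with hIA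
  set IB : Ideal (MvPolynomial (Fin 2) ℤ) :=
    Ideal.span {(2 * X 0 ^ 3 + X 0 ^ 2 * X 1 : MvPolynomial (Fin 2) ℤ),
      X 0 ^ 2, 2 * X 0 * X 1 + X 1 ^ 2} with hIB
  -- the class of x in A
  set a : MvPolynomial (Fin 2) ℤ ⧸ IA := Ideal.Quotient.mk IA (X 0) with ha
  -- 2 a^3 = 0
  have h2a3 : 2 * a ^ 3 = 0 := by
    rw [ha, ← map_pow, ← map_ofNat (Ideal.Quotient.mk IA) 2, ← map_mul,
      Ideal.Quotient.eq_zero_iff_mem]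
    exact Ideal.subset_span (by simp)
  -- a^3 ≠ 0, via the map to (ZMod 2)[T] sending both variables to T
  have ha3 : a ^ 3 ≠ 0 := by
    intro h
    have hker : ∀ p ∈ ({(2 * X 0 ^ 3 : MvPolynomial (Fin 2) ℤ),
        2 * X 1 * X 0, X 1 ^ 2 - X 0 ^ 2} : Set (MvPolynomial (Fin 2) ℤ)),
        eval₂ (Int.castRingHom (Polynomial (ZMod 2))) (fun _ => Polynomial.X) p = 0 := by
      have h2 : (2 : Polynomial (ZMod 2)) = 0 := by
        rw [← map_ofNat Polynomial.C 2, show (2 : ZMod 2) = 0 by decide, map_zero]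
      rintro p (rfl | rfl | rfl) <;>
        simp [eval₂_mul, eval₂_pow, eval₂_sub] <;> ring_nf <;> simp [h2]
    have hle : IA ≤ RingHom.ker (eval₂Hom (Int.castRingHom (Polynomial (ZMod 2)))
        (fun _ => Polynomial.X)) := by
      rw [hIA, Ideal.span_le]
      intro p hp
      exact hker p hp
    have := congrArg (Ideal.Quotient.lift IA _ (fun x hx => RingHom.mem_ker.mp (hle hx))) h
    rw [ha, ← map_pow, Ideal.Quotient.lift_mk, map_zero] at this
    simp only [coe_eval₂Hom, eval₂_pow, eval₂_X] at this
    exact pow_ne_zero 3 Polynomial.X_ne_zero this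
  -- In B, 2 q^3 = 0 → q^3 = 0
  have hB : ∀ q : MvPolynomial (Fin 2) ℤ ⧸ IB, 2 * q ^ 3 = 0 → q ^ 3 = 0 := by
    intro q hq
    obtain ⟨p, rfl⟩ := Ideal.Quotient.mk_surjective q
    -- constant coefficient of p is 0
    have hker : IB ≤ RingHom.ker (constantCoeff : MvPolynomial (Fin 2) ℤ →+* ℤ) := by
      rw [hIB, Ideal.span_le]
      rintro r (rfl | rfl | rfl) <;> simp [RingHom.mem_ker]
    have hc : constantCoeff p = 0 := by
      have := congrArg (Ideal.Quotient.lift IB _ (fun x hx => RingHom.mem_ker.mp (hker hx))) hq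
      rw [← map_pow, ← map_ofNat (Ideal.Quotient.mk IB) 2, ← map_mul,
        Ideal.Quotient.lift_mk, map_zero] at this
      simp only [map_mul, map_pow, map_ofNat] at this
      have : (constantCoeff p) ^ 3 = 0 := by linarith [this]
      exact pow_eq_zero_iff (by norm_num) |>.mp this
    -- hence p ∈ (X0, X1)
    have hmem : p ∈ Ideal.span ({X 0, X 1} : Set (MvPolynomial (Fin 2) ℤ)) := by
      have himg : (MvPolynomial.X '' (Set.univ : Set (Fin 2)) :
          Set (MvPolynomial (Fin 2) ℤ)) = {X 0, X 1} := by
        ext r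
        simp [Fin.exists_fin_two, eq_comm]
      rw [← himg, mem_ideal_span_X_image]
      intro m hm
      rcases Finsupp.ne_iff.mp (fun h0 : m = 0 => by
        rw [h0] at hm
        exact (mem_support_iff.mp hm) hc) with ⟨i, hi⟩
      exact ⟨i, Set.mem_univ i, by simpa using hi⟩
    obtain ⟨u, v, huv⟩ := Ideal.mem_span_pair.mp hmem
    rw [← map_pow, Ideal.Quotient.eq_zero_iff_mem, ← huv]
    have key : (u * X 0 + v * X 1) ^ 3 =
        (u ^ 3 * X 0 + (3 * u ^ 2 * v - 6 * u * v ^ 2 + 4 * v ^ 3) * X 1) * (X 0 ^ 2)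
          + ((3 * u * v ^ 2 - 2 * v ^ 3) * X 0 + v ^ 3 * X 1) * (2 * X 0 * X 1 + X 1 ^ 2) := by
      ring
    rw [key]
    refine Ideal.add_mem _ (Ideal.mul_mem_left _ _ ?_) (Ideal.mul_mem_left _ _ ?_) <;>
      exact Ideal.subset_span (by simp)
  -- contradiction
  have := hB (e a) (by rw [← map_pow, ← map_ofNat e 2, ← map_mul, h2a3, map_zero])
  rw [← map_pow] at this
  exact ha3 (e.injective (by rw [map_zero]; exact this))
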